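/- Let S, T ⊆ ℤ/nℤ be formally dual subsets. Then (|S|²/|T|)·ν_T(1) = Σ_{e | n} μ(n/e)·ν_S(e). -/

import Mathlib

open Finset Complex

/-- Weight enumerator: number of ordered pairs in `S × S` with difference `y`. -/
def nuW {n : ℕ} [NeZero n] (S : Finset (ZMod n)) (y : ZMod n) : ℕ :=
  ((S ×ˢ S).filter (fun p => p.1 - p.2 = y)).card

/-- `n`-th root of unity `ζ_n = exp(2πi/n)`. -/
noncomputable def zetaC (n : ℕ) : ℂ := Complex.exp (2 * Real.pi * Complex.I / n)

/-- Formal duality of `S, T ⊆ ℤ/nℤ` (both directions). -/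
def IsFormallyDual {n : ℕ} [NeZero n] (S T : Finset (ZMod n)) : Prop :=
  S.Nonempty ∧ T.Nonempty ∧
  (∀ y : ZMod n, ((S.card : ℂ) ^ 2 / (T.card : ℂ)) * (nuW T y : ℂ) =
    ∑ v : ZMod n, (nuW S v : ℂ) * zetaC n ^ (v.val * y.val)) ∧
  (∀ y : ZMod n, ((T.card : ℂ) ^ 2 / (S.card : ℂ)) * (nuW S y : ℂ) =
    ∑ v : ZMod n, (nuW T v : ℂ) * zetaC n ^ (v.val * y.val))

open Polynomial

lemma sum_nthRootsFinset {m : ℕ} (hm : 0 < m) :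
    ∑ x ∈ nthRootsFinset m (1 : ℂ), x = if m = 1 then 1 else 0 := by
  have hξ := Complex.isPrimitiveRoot_exp m hm.ne'
  set ξ := Complex.exp (2 * Real.pi * Complex.I / m) with hξdef
  have hnth : (nthRoots m (1 : ℂ)) = (Multiset.range m).map (ξ ^ · * 1) :=
    hξ.nthRoots_eq (one_pow m)
  have hsum : ∑ x ∈ nthRootsFinset m (1 : ℂ), x = ∑ j ∈ Finset.range m, ξ ^ j := by
    rw [nthRootsFinset_def, ← Multiset.toFinset_eq (hξ.nthRoots_one_nodup)]
    rw [Finset.sum_eq_multiset_sum]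
    simp only [Multiset.map_id', hnth, Multiset.sum_map_mul_right]
    simp [Finset.sum, Finset.range]
  rw [hsum]
  rcases eq_or_lt_of_le (Nat.one_le_iff_ne_zero.mpr hm.ne') with h1 | h1
  · simp [← h1]
  · rw [if_neg (by omega)]
    have hne : ξ ≠ 1 := hξ.ne_one h1
    rw [geom_sum_eq hne, hξ.pow_eq_one, sub_self, zero_div]

lemma sum_primitiveRoots_eq_moebius (m : ℕ) (hm : 0 < m) :
    ∑ x ∈ primitiveRoots m ℂ, x = ((ArithmeticFunction.moebius m : ℤ) : ℂ) := by
  have key : ∀ k > 0, ∑ d ∈ Nat.divisors k, (∑ x ∈ primitiveRoots d ℂ, x)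
      = (fun k => if k = 1 then (1:ℂ) else 0) k := by
    intro k hk
    have : NeZero k := ⟨hk.ne'⟩
    have hξ := Complex.isPrimitiveRoot_exp k hk.ne'
    show _ = if k = 1 then (1:ℂ) else 0
    rw [← sum_nthRootsFinset hk, IsPrimitiveRoot.nthRoots_one_eq_biUnion_primitiveRoots,
      Finset.sum_biUnion]
    intro i _ j _ hij
    exact IsPrimitiveRoot.disjoint hij
  have := (ArithmeticFunction.sum_eq_iff_sum_smul_moebius_eq
    (f := fun d => ∑ x ∈ primitiveRoots d ℂ, x)
    (g := fun k => if k = 1 then (1:ℂ) else 0)).mp key m hm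
  rw [← this]
  rw [Finset.sum_eq_single (m, 1)]
  · simp
  · rintro ⟨a, b⟩ hab hne
    rw [Nat.mem_divisorsAntidiagonal] at hab
    have hb : b ≠ 1 := by
      rintro rfl
      exact hne (by simp [← hab.1])
    simp [hb]
  · intro hmem
    exact absurd (Nat.mem_divisorsAntidiagonal.mpr ⟨(mul_one m).symm ▸ rfl, hm.ne'⟩) hmem

lemma galois_transport {n : ℕ} [NeZero n] (f : ZMod n → ℕ) (E : ZMod n → ℕ) (c : ℚ)
    (u : ℕ) (hu : u.Coprime n)
    (h : ∑ v : ZMod n, (f v : ℂ) * zetaC n ^ (E v) = (c : ℂ)) :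
    ∑ v : ZMod n, (f v : ℂ) * zetaC n ^ (E v * u) = (c : ℂ) := by
  have hn : n ≠ 0 := NeZero.ne n
  have hζ : IsPrimitiveRoot (zetaC n) n := Complex.isPrimitiveRoot_exp n hn
  set P : Polynomial ℚ :=
    (∑ v : ZMod n, Polynomial.C ((f v : ℚ)) * Polynomial.X ^ (E v)) - Polynomial.C c with hP
  have haevalP : ∀ z : ℂ, Polynomial.aeval z P
      = ∑ v : ZMod n, (f v : ℂ) * z ^ (E v) - (c : ℂ) := by
    intro z
    simp [hP, Polynomial.aeval_def, Polynomial.eval₂_finset_sum]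
  have hroot : Polynomial.aeval (zetaC n) P = 0 := by
    rw [haevalP, h, sub_self]
  have hdvd : minpoly ℚ (zetaC n) ∣ P := minpoly.dvd ℚ _ hroot
  rw [← Polynomial.cyclotomic_eq_minpoly_rat hζ (Nat.pos_of_ne_zero hn)] at hdvd
  obtain ⟨q, hq⟩ := hdvd
  have hζu : IsPrimitiveRoot (zetaC n ^ u) n := hζ.pow_of_coprime u hu
  have hroot2 : Polynomial.aeval (zetaC n ^ u) P = 0 := by
    rw [hq, map_mul]
    have : Polynomial.aeval (zetaC n ^ u) (Polynomial.cyclotomic n ℚ) = 0 := by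
      rw [Polynomial.aeval_def, Polynomial.eval₂_eq_eval_map, Polynomial.map_cyclotomic]
      exact hζu.isRoot_cyclotomic (Nat.pos_of_ne_zero hn)
    rw [this, zero_mul]
  rw [haevalP, sub_eq_zero] at hroot2
  rw [← hroot2]
  refine Finset.sum_congr rfl fun v _ => ?_
  rw [← pow_mul, mul_comm (E v) u, pow_mul]

lemma zetaC_pow_congr {n : ℕ} (hn : n ≠ 0) {a b : ℕ} (hab : a ≡ b [MOD n]) :
    zetaC n ^ a = zetaC n ^ b := by
  have hζ : IsPrimitiveRoot (zetaC n) n := Complex.isPrimitiveRoot_exp n hn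
  have h1 : zetaC n ^ n = 1 := hζ.pow_eq_one
  have key : ∀ x : ℕ, zetaC n ^ x = zetaC n ^ (x % n) := by
    intro x
    conv_lhs => rw [← Nat.mod_add_div x n]
    rw [pow_add, pow_mul, h1, one_pow, mul_one]
  rw [key a, key b, hab]

lemma nuW_unit_mul {n : ℕ} [NeZero n] (S T : Finset (ZMod n)) (h : IsFormallyDual S T)
    (u : ℕ) (hu : u.Coprime n) (y : ZMod n) :
    nuW S ((u : ZMod n) * y) = nuW S y := by
  obtain ⟨hS, hT, _, hdual⟩ := h
  have hn : n ≠ 0 := NeZero.ne n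
  have hScard : (S.card : ℂ) ≠ 0 := Nat.cast_ne_zero.mpr (Finset.card_ne_zero_of_mem hS.choose_spec)
  have hTcard : (T.card : ℂ) ≠ 0 := Nat.cast_ne_zero.mpr (Finset.card_ne_zero_of_mem hT.choose_spec)
  set c : ℚ := (T.card : ℚ) ^ 2 / (S.card : ℚ) * (nuW S y : ℚ) with hc
  have hcC : ((c : ℚ) : ℂ) = ((T.card : ℂ) ^ 2 / (S.card : ℂ)) * (nuW S y : ℂ) := by
    push_cast [hc]; ring
  have h1 : ∑ v : ZMod n, (nuW T v : ℂ) * zetaC n ^ (v.val * y.val) = (c : ℂ) := by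
    rw [hcC, ← hdual y]
  have h2 := galois_transport (nuW T) (fun v => v.val * y.val) c u hu h1
  have h3 : ∑ v : ZMod n, (nuW T v : ℂ) * zetaC n ^ (v.val * ((u : ZMod n) * y).val) = (c : ℂ) := by
    rw [← h2]
    refine Finset.sum_congr rfl fun v _ => ?_
    congr 1
    apply zetaC_pow_congr hn
    have : ((u : ZMod n) * y).val ≡ u * y.val [MOD n] := by
      calc ((u : ZMod n) * y).val ≡ (u : ZMod n).val * y.val [MOD n] := by
            rw [ZMod.val_mul]; exact (Nat.mod_modEq _ n)
        _ ≡ u * y.val [MOD n] := by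
            exact Nat.ModEq.mul_right y.val (by rw [ZMod.val_natCast]; exact (Nat.mod_modEq u n))
    calc v.val * ((u : ZMod n) * y).val ≡ v.val * (u * y.val) [MOD n] :=
          this.mul_left v.val
      _ = v.val * y.val * u := by ring
  have h4 := hdual ((u : ZMod n) * y)
  rw [h3, hcC] at h4
  have h5 : (nuW S ((u : ZMod n) * y) : ℂ) = (nuW S y : ℂ) := by
    have hfrac : ((T.card : ℂ) ^ 2 / (S.card : ℂ)) ≠ 0 :=
      div_ne_zero (pow_ne_zero 2 hTcard) hScard
    exact mul_left_cancel₀ hfrac h4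
  exact_mod_cast h5

lemma exists_unit_rep {n : ℕ} [NeZero n] (v : ZMod n) :
    ∃ u : ℕ, u.Coprime n ∧ (u : ZMod n) * ((Nat.gcd v.val n : ℕ) : ZMod n) = v := by
  have hn : n ≠ 0 := NeZero.ne n
  set g := Nat.gcd v.val n with hg
  have hgdvdn : g ∣ n := Nat.gcd_dvd_right _ _
  have hgdvdv : g ∣ v.val := Nat.gcd_dvd_left _ _
  have hgpos : 0 < g := Nat.gcd_pos_of_pos_right _ (Nat.pos_of_ne_zero hn)
  set w := v.val / g with hw
  have hcop : w.Coprime (n / g) := by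
    rw [hw]
    exact Nat.coprime_div_gcd_div_gcd hgpos
  have hng : (n / g) ∣ n := Nat.div_dvd_of_dvd hgdvdn
  have : NeZero (n / g) := ⟨Nat.div_ne_zero_iff_of_dvd hgdvdn |>.mpr ⟨hn, hgpos.ne'⟩⟩
  obtain ⟨U, hU⟩ := ZMod.unitsMap_surjective hng (ZMod.unitOfCoprime w hcop)
  refine ⟨(U : ZMod n).val, ZMod.val_coe_unit_coprime U, ?_⟩
  have hUw : (((U : ZMod n).val : ℕ) : ZMod (n / g)) = (w : ZMod (n / g)) := by
    have := congrArg (fun x => ((x : (ZMod (n/g))ˣ) : ZMod (n/g))) hU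
    simp only [ZMod.unitsMap_def, Units.coe_map, ZMod.coe_unitOfCoprime] at this
    rw [← this]
    simp [ZMod.natCast_val, ZMod.castHom_apply]
  have hmod : (U : ZMod n).val ≡ w [MOD n / g] := (ZMod.natCast_eq_natCast_iff _ _ _).mp hUw
  have hmuln : (U : ZMod n).val * g ≡ w * g [MOD n] := by
    have h2 := Nat.ModEq.mul_right' (c := g) hmod
    rwa [Nat.div_mul_cancel hgdvdn] at h2
  have hcast : (((U : ZMod n).val * g : ℕ) : ZMod n) = ((w * g : ℕ) : ZMod n) :=
    (ZMod.natCast_eq_natCast_iff _ _ _).mpr hmuln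
  have hwg : w * g = v.val := Nat.div_mul_cancel hgdvdv
  push_cast at hcast
  rw [hcast, show ((w:ZMod n) * (g:ZMod n) = ((w*g : ℕ) : ZMod n)) by push_cast; ring, hwg,
    ZMod.natCast_val, ZMod.cast_id]

lemma fiber_zeta_sum {n : ℕ} [NeZero n] (g : ℕ) (hg : g ∣ n) :
    ∑ v ∈ Finset.univ.filter (fun v : ZMod n => Nat.gcd v.val n = g), zetaC n ^ v.val
      = ∑ x ∈ primitiveRoots (n / g) ℂ, x := by
  have hn : n ≠ 0 := NeZero.ne n
  have hgpos : 0 < g := Nat.pos_of_dvd_of_pos hg (Nat.pos_of_ne_zero hn)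
  have hmpos : 0 < n / g := Nat.div_pos (Nat.le_of_dvd (Nat.pos_of_ne_zero hn) hg) hgpos
  have : NeZero (n / g) := ⟨hmpos.ne'⟩
  have hζ : IsPrimitiveRoot (zetaC n) n := Complex.isPrimitiveRoot_exp n hn
  have hfac : n = g * (n / g) := (Nat.mul_div_cancel' hg).symm
  have hξ : IsPrimitiveRoot (zetaC n ^ g) (n / g) := hζ.pow (Nat.pos_of_ne_zero hn) hfac
  refine Finset.sum_bij (fun v _ => zetaC n ^ v.val) ?_ ?_ ?_ ?_
  · intro v hv
    rw [Finset.mem_filter] at hv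
    have hgv : g ∣ v.val := hv.2 ▸ Nat.gcd_dvd_left _ _
    have hcop : (v.val / g).Coprime (n / g) := by
      have := Nat.coprime_div_gcd_div_gcd (m := v.val) (n := n)
        (Nat.gcd_pos_of_pos_right _ (Nat.pos_of_ne_zero hn))
      rwa [hv.2] at this
    have : zetaC n ^ v.val = (zetaC n ^ g) ^ (v.val / g) := by
      rw [← pow_mul, Nat.mul_div_cancel' hgv]
    show zetaC n ^ v.val ∈ primitiveRoots (n / g) ℂ
    rw [this, mem_primitiveRoots hmpos]
    exact hξ.pow_of_coprime _ hcop
  · intro a ha b hb hab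
    rw [Finset.mem_filter] at ha hb
    exact ZMod.val_injective n (hζ.pow_inj (ZMod.val_lt a) (ZMod.val_lt b) hab)
  · intro x hx
    rw [mem_primitiveRoots hmpos] at hx
    obtain ⟨k, hk, hkcop, hkx⟩ := (hξ.isPrimitiveRoot_iff).mp hx
    refine ⟨((k * g : ℕ) : ZMod n), ?_, ?_⟩
    · rw [Finset.mem_filter]
      refine ⟨Finset.mem_univ _, ?_⟩
      have hlt : k * g < n := by
        calc k * g < (n / g) * g := by
              exact (Nat.mul_lt_mul_right hgpos).mpr hk
          _ = n := Nat.div_mul_cancel hg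
      rw [ZMod.val_natCast_of_lt hlt]
      calc Nat.gcd (k * g) n = Nat.gcd (g * k) (g * (n / g)) := by rw [mul_comm k g, ← hfac]
        _ = g * Nat.gcd k (n / g) := Nat.gcd_mul_left g k (n / g)
        _ = g * 1 := by rw [hkcop]
        _ = g := mul_one g
    · have hlt : k * g < n := by
        calc k * g < (n / g) * g := (Nat.mul_lt_mul_right hgpos).mpr hk
          _ = n := Nat.div_mul_cancel hg
      show zetaC n ^ (((k * g : ℕ) : ZMod n)).val = x
      rw [ZMod.val_natCast_of_lt hlt, ← hkx, ← pow_mul, mul_comm g k]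
  · intro v hv
    rfl

theorem stmt7 (n : ℕ) [NeZero n] (S T : Finset (ZMod n)) (h : IsFormallyDual S T) :
    ((S.card : ℂ) ^ 2 / (T.card : ℂ)) * (nuW T 1 : ℂ) =
      ∑ e ∈ n.divisors, (ArithmeticFunction.moebius (n / e) : ℂ) * (nuW S (e : ZMod n) : ℂ) := by
  have hn : n ≠ 0 := NeZero.ne n
  rw [h.2.2.1 1]
  by_cases hn1 : n = 1
  · subst hn1
    rw [Nat.divisors_one]
    simp [Finset.univ_unique, Subsingleton.elim ((1 : ZMod 1)) 0]
    exact congrArg (nuW S) (Subsingleton.elim _ _)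
  · have h2 : 1 < n := by omega
    have hval1 : (1 : ZMod n).val = 1 := by
      rw [ZMod.val_one_eq_one_mod, Nat.mod_eq_of_lt h2]
    simp only [hval1, mul_one]
    rw [← Finset.sum_fiberwise_of_maps_to (g := fun v : ZMod n => Nat.gcd v.val n)
      (fun v _ => Nat.mem_divisors.mpr ⟨Nat.gcd_dvd_right _ _, hn⟩)]
    refine Finset.sum_congr rfl fun g hg => ?_
    rw [Nat.mem_divisors] at hg
    have hsame : ∀ v ∈ Finset.univ.filter (fun v : ZMod n => Nat.gcd v.val n = g),
        (nuW S v : ℂ) * zetaC n ^ v.val = (nuW S (g : ZMod n) : ℂ) * zetaC n ^ v.val := by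
      intro v hv
      rw [Finset.mem_filter] at hv
      obtain ⟨u, hu, huv⟩ := exists_unit_rep v
      rw [hv.2] at huv
      rw [← huv, nuW_unit_mul S T h u hu]
    rw [Finset.sum_congr rfl hsame, ← Finset.mul_sum, fiber_zeta_sum g hg.1,
      sum_primitiveRoots_eq_moebius (n / g)
        (Nat.div_pos (Nat.le_of_dvd (Nat.pos_of_ne_zero hn) hg.1)
          (Nat.pos_of_dvd_of_pos hg.1 (Nat.pos_of_ne_zero hn))),
      mul_comm]
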